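/- For every z = (x_C, x_S, x_R) ∈ ℝ³, the Lie bracket of g_P with g_V is given explicitly by [g_P, g_V](z) = (−β c_V x_S (1 − x_S − x_R), 0, −(β − β̂) x_S (1 − x_S − x_R)). -/

import Mathlib

noncomputable section

/-- Drift vector field of the Mayer-form SIRI dynamics, `z = (x_C, x_S, x_R)`. -/
def fVec (cP cI γ : ℝ) (z : ℝ × ℝ × ℝ) : ℝ × ℝ × ℝ :=
  (cP * (z.2.1 + z.2.2) + cI * (1 - z.2.1 - z.2.2), 0, γ * (1 - z.2.1 - z.2.2))

/-- Control vector field for the protection input. -/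
def gPVec (β βh cP : ℝ) (z : ℝ × ℝ × ℝ) : ℝ × ℝ × ℝ :=
  (-(cP * (z.2.1 + z.2.2)), -(β * z.2.1 * (1 - z.2.1 - z.2.2)),
    -(βh * z.2.2 * (1 - z.2.1 - z.2.2)))

/-- Control vector field for the vaccination input. -/
def gVVec (cV : ℝ) (z : ℝ × ℝ × ℝ) : ℝ × ℝ × ℝ := (cV * z.2.1, -z.2.1, z.2.1)

/-- Lie bracket of two vector fields on `ℝ³`:
`[X, Y](z) = DY(z) X(z) − DX(z) Y(z)`, where `D` is the Fréchet derivative. -/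
def lieBr (X Y : ℝ × ℝ × ℝ → ℝ × ℝ × ℝ) (z : ℝ × ℝ × ℝ) : ℝ × ℝ × ℝ :=
  fderiv ℝ Y z (X z) - fderiv ℝ X z (Y z)

namespace SiriAux

/-- projection onto second-first coordinate as a CLM -/
def S : (ℝ × ℝ × ℝ) →L[ℝ] ℝ :=
  (ContinuousLinearMap.fst ℝ ℝ ℝ).comp (ContinuousLinearMap.snd ℝ ℝ (ℝ × ℝ))

/-- projection onto second-second coordinate as a CLM -/
def R : (ℝ × ℝ × ℝ) →L[ℝ] ℝ :=
  (ContinuousLinearMap.snd ℝ ℝ ℝ).comp (ContinuousLinearMap.snd ℝ ℝ (ℝ × ℝ))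

lemma hs (z : ℝ × ℝ × ℝ) : HasFDerivAt (fun z : ℝ × ℝ × ℝ => z.2.1) S z :=
  (hasFDerivAt_snd.fst : _)

lemma hr (z : ℝ × ℝ × ℝ) : HasFDerivAt (fun z : ℝ × ℝ × ℝ => z.2.2) R z :=
  (hasFDerivAt_snd.snd : _)

lemma hw (z : ℝ × ℝ × ℝ) :
    HasFDerivAt (fun z : ℝ × ℝ × ℝ => 1 - z.2.1 - z.2.2) (0 - S - R) z :=
  ((hasFDerivAt_const (1 : ℝ) z).sub (hs z)).sub (hr z)

lemma hgV (cV : ℝ) (z : ℝ × ℝ × ℝ) :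
    HasFDerivAt (gVVec cV) ((cV • S).prod ((-S).prod S)) z := by
  exact HasFDerivAt.prodMk ((hs z).const_mul cV) (HasFDerivAt.prodMk ((hs z).neg) (hs z))

lemma hgP (β βh cP : ℝ) (z : ℝ × ℝ × ℝ) :
    HasFDerivAt (gPVec β βh cP)
      ((-(cP • (S + R))).prod
        ((-((β * z.2.1) • (0 - S - R) + (1 - z.2.1 - z.2.2) • (β • S))).prod
         (-((βh * z.2.2) • (0 - S - R) + (1 - z.2.1 - z.2.2) • (βh • R))))) z := by
  exact HasFDerivAt.prodMk (HasFDerivAt.neg (((hs z).add (hr z)).const_mul cP))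
    (HasFDerivAt.prodMk (HasFDerivAt.neg (HasFDerivAt.mul ((hs z).const_mul β) (hw z)))
      (HasFDerivAt.neg (HasFDerivAt.mul ((hr z).const_mul βh) (hw z))))

end SiriAux

open SiriAux in
/-- explicit formula for `[g_P, g_V]`. -/
theorem siri_lie_gP_gV
    (β βh γ cP cV cI : ℝ)
    (hβ : 0 < β) (hβh : 0 < βh) (hγ : 0 < γ)
    (hcP : 0 < cP) (hcV : 0 < cV) (hcI : 0 < cI) :
    ∀ z : ℝ × ℝ × ℝ,
      lieBr (gPVec β βh cP) (gVVec cV) z =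
        (-(β * cV * z.2.1 * (1 - z.2.1 - z.2.2)), 0,
          -((β - βh) * z.2.1 * (1 - z.2.1 - z.2.2))) := by
  intro z
  unfold lieBr
  rw [(hgV cV z).fderiv, (hgP β βh cP z).fderiv]
  simp only [ContinuousLinearMap.prod_apply, ContinuousLinearMap.smul_apply,
    ContinuousLinearMap.neg_apply, ContinuousLinearMap.add_apply,
    ContinuousLinearMap.sub_apply, ContinuousLinearMap.zero_apply,
    ContinuousLinearMap.coe_comp', Function.comp_apply,
    ContinuousLinearMap.coe_fst', ContinuousLinearMap.coe_snd',
    S, R, gPVec, gVVec, smul_eq_mul, Prod.mk_sub_mk]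
  refine Prod.ext ?_ (Prod.ext ?_ ?_) <;> simp <;> ring
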